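/- Let Z and Z' be tails of a nodal curve C with k_Z > 1, k_{Z'} > 1, such that (Z,Z') is free (Term_Z ∩ Term_{Z'} = ∅), Z ∧ Z' is nonempty, Z ∪ Z' ≠ C, and (k_Z, k_{Z'}) = (2,3). Then k_{Z∧Z'} > 1, k_{Z∪Z'} > 1, k_{Z∧Z'} + k_{Z∪Z'} = 5, and both Z ∧ Z' and Z ∪ Z' are tails. -/

import Mathlib

open Set

/- Dual multigraph model of a nodal curve: vertices `V` are irreducible
components, edges `E` are nodes, with endpoint maps `s t : E → V`. -/

/-- The set of terminal points (edges of the cut) of a vertex subset `Z`. -/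
def TermPts {V E : Type} (s t : E → V) (Z : Set V) : Set E :=
  {e | (s e ∈ Z ∧ t e ∉ Z) ∨ (t e ∈ Z ∧ s e ∉ Z)}

/-- A subcurve is a nonempty proper subset of the components. -/
def Subcurve {V : Type} (Z : Set V) : Prop := Z.Nonempty ∧ Z ≠ Set.univ

/-- Connectivity of the induced sub-multigraph on `Z`. -/
def ConnOn {V E : Type} (s t : E → V) (Z : Set V) : Prop :=
  ∀ x ∈ Z, ∀ y ∈ Z,
    Relation.ReflTransGen
      (fun a b => a ∈ Z ∧ b ∈ Z ∧ ∃ e, (s e = a ∧ t e = b) ∨ (s e = b ∧ t e = a)) x y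

/-- A tail is a subcurve with both sides connected. -/
def IsTail {V E : Type} (s t : E → V) (Z : Set V) : Prop :=
  Subcurve Z ∧ ConnOn s t Z ∧ ConnOn s t Zᶜ

/-- `k_Z`, the number of terminal points of `Z`. -/
noncomputable def kcut {V E : Type} (s t : E → V) (Z : Set V) : ℕ :=
  (TermPts s t Z).ncard

/-- The pair `(Z, Z')` is free if the edge cuts are disjoint. -/
def FreePair {V E : Type} (s t : E → V) (Z Z' : Set V) : Prop :=
  TermPts s t Z ∩ TermPts s t Z' = ∅

/-- The pair `(Z, Z')` is perfect. -/
def PerfectPair {V : Type} (Z Z' : Set V) : Prop :=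
  Z ⊆ Z' ∨ Z' ⊆ Z ∨ Zᶜ ⊆ Z' ∨ Z' ⊆ Zᶜ

section helpers
variable {V E : Type} (s t : E → V)

abbrev crel (W : Set V) (a b : V) : Prop :=
  a ∈ W ∧ b ∈ W ∧ ∃ e, (s e = a ∧ t e = b) ∨ (s e = b ∧ t e = a)

lemma crel_symm (W : Set V) : Symmetric (crel s t W) :=
  fun _ _ ⟨ha, hb, e, h⟩ => ⟨hb, ha, e, h.symm⟩

lemma connOn_union {W W' : Set V} (h : ConnOn s t W) (h' : ConnOn s t W')
    (hne : (W ∩ W').Nonempty) : ConnOn s t (W ∪ W') := by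
  obtain ⟨a, haW, haW'⟩ := hne
  have mono : ∀ (U : Set V), U ⊆ W ∪ W' → ∀ x y,
      Relation.ReflTransGen (crel s t U) x y →
      Relation.ReflTransGen (crel s t (W ∪ W')) x y :=
    fun U hU x y hxy =>
      Relation.ReflTransGen.mono (fun p q ⟨hp, hq, he⟩ => ⟨hU hp, hU hq, he⟩) _ _ hxy
  have symm : ∀ {x y}, Relation.ReflTransGen (crel s t (W ∪ W')) x y → Relation.ReflTransGen (crel s t (W ∪ W')) y x :=
    fun h => (@Relation.ReflTransGen.stdSymm _ _ ⟨fun _ _ h => crel_symm s t (W ∪ W') h⟩).symm _ _ h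
  intro x hx y hy
  have key : ∀ z ∈ W ∪ W', Relation.ReflTransGen (crel s t (W ∪ W')) z a := by
    intro z hz
    rcases hz with hz | hz
    · exact mono W subset_union_left z a (h z hz a haW)
    · exact mono W' subset_union_right z a (h' z hz a haW')
  exact (key x hx).trans (symm (key y hy))

lemma exists_cross {W X : Set V} (h : ConnOn s t W) {x y : V}
    (hx : x ∈ W) (hy : y ∈ W) (hxX : x ∈ X) (hyX : y ∉ X) :
    ∃ e, s e ∈ W ∧ t e ∈ W ∧ ((s e ∈ X ∧ t e ∉ X) ∨ (t e ∈ X ∧ s e ∉ X)) := by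
  have main : ∀ z, Relation.ReflTransGen (crel s t W) x z → z ∉ X →
      ∃ e, s e ∈ W ∧ t e ∈ W ∧ ((s e ∈ X ∧ t e ∉ X) ∨ (t e ∈ X ∧ s e ∉ X)) := by
    intro z walk
    induction walk with
    | refl => intro hz; exact absurd hxX hz
    | @tail b c hxb hbc ih =>
      intro hc
      by_cases hb : b ∈ X
      · obtain ⟨hbW, hcW, e, he⟩ := hbc
        rcases he with ⟨h1, h2⟩ | ⟨h1, h2⟩
        · exact ⟨e, by rw [h1]; exact hbW, by rw [h2]; exact hcW,
            Or.inl ⟨by rw [h1]; exact hb, by rw [h2]; exact hc⟩⟩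
        · exact ⟨e, by rw [h1]; exact hcW, by rw [h2]; exact hbW,
            Or.inr ⟨by rw [h2]; exact hb, by rw [h1]; exact hc⟩⟩
      · exact ih hb
  exact main y (h x hx y hy) hyX

lemma connOn_of_unique_cross {W X : Set V} (hW : ConnOn s t W) (hXW : X ⊆ W)
    {a0 : V} (ha0 : a0 ∈ X)
    (huniq : ∀ e, s e ∈ W → t e ∈ W →
      (s e ∈ X → t e ∉ X → s e = a0) ∧ (t e ∈ X → s e ∉ X → t e = a0)) :
    ConnOn s t X := by
  have symm : ∀ {x y}, Relation.ReflTransGen (crel s t X) x y → Relation.ReflTransGen (crel s t X) y x :=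
    fun h => (@Relation.ReflTransGen.stdSymm _ _ ⟨fun _ _ h => crel_symm s t X h⟩).symm _ _ h
  have key : ∀ x y : V, Relation.ReflTransGen (crel s t W) x y → x ∈ X → y ∈ X →
      (Relation.ReflTransGen (crel s t X) x y ∨ Relation.ReflTransGen (crel s t X) x a0) := by
    intro x y hxy
    induction hxy using Relation.ReflTransGen.head_induction_on with
    | refl => intro _ _; exact Or.inl Relation.ReflTransGen.refl
    | @head x b hab hby ih =>
      intro hx hy
      obtain ⟨hxW, hbW, e, he⟩ := hab
      by_cases hb : b ∈ X
      · have step : crel s t X x b := ⟨hx, hb, e, he⟩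
        rcases ih hb hy with h | h
        · exact Or.inl (Relation.ReflTransGen.head step h)
        · exact Or.inr (Relation.ReflTransGen.head step h)
      · rcases he with ⟨h1, h2⟩ | ⟨h1, h2⟩
        · have : s e = a0 := (huniq e (by rw [h1]; exact hxW) (by rw [h2]; exact hbW)).1
            (by rw [h1]; exact hx) (by rw [h2]; exact hb)
          rw [h1] at this
          exact Or.inr (this ▸ Relation.ReflTransGen.refl)
        · have : t e = a0 := (huniq e (by rw [h1]; exact hbW) (by rw [h2]; exact hxW)).2
            (by rw [h2]; exact hx) (by rw [h1]; exact hb)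
          rw [h2] at this
          exact Or.inr (this ▸ Relation.ReflTransGen.refl)
  intro x hx y hy
  rcases key x y (hW x (hXW hx) y (hXW hy)) hx hy with h | h
  · exact h
  rcases key y x (hW y (hXW hy) x (hXW hx)) hy hx with h' | h'
  · exact symm h'
  · exact h.trans (symm h')

end helpers

set_option maxHeartbeats 3000000 in
/-- Lemma 3.3 (iii): for free tails `Z, Z'` with `(k_Z, k_{Z'}) = (2,3)`,
nonempty intersection and proper union, the intersection and union are tails
with `k_{Z∧Z'} > 1`, `k_{Z∪Z'} > 1` and `k_{Z∧Z'} + k_{Z∪Z'} = 5`. -/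
theorem stmt_5 {V E : Type} [Fintype V] [Fintype E] (s t : E → V)
    (hC : ConnOn s t Set.univ) (Z Z' : Set V)
    (hZ : IsTail s t Z) (hZ' : IsTail s t Z')
    (hkZ : 1 < kcut s t Z) (hkZ' : 1 < kcut s t Z')
    (hfree : FreePair s t Z Z')
    (hne : (Z ∩ Z').Nonempty) (hun : Z ∪ Z' ≠ Set.univ)
    (hk2 : kcut s t Z = 2) (hk3 : kcut s t Z' = 3) :
    1 < kcut s t (Z ∩ Z') ∧ 1 < kcut s t (Z ∪ Z') ∧
    kcut s t (Z ∩ Z') + kcut s t (Z ∪ Z') = 5 ∧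
    IsTail s t (Z ∩ Z') ∧ IsTail s t (Z ∪ Z') := by
  by_cases hB : (Z \ Z').Nonempty
  swap
  · have hsub : Z ⊆ Z' := Set.diff_eq_empty.mp (Set.not_nonempty_iff_eq_empty.mp hB)
    rw [Set.inter_eq_left.mpr hsub, Set.union_eq_right.mpr hsub]
    exact ⟨hkZ, hkZ', by rw [hk2, hk3], hZ, hZ'⟩
  by_cases hCne : (Z' \ Z).Nonempty
  swap
  · have hsub : Z' ⊆ Z := Set.diff_eq_empty.mp (Set.not_nonempty_iff_eq_empty.mp hCne)
    rw [Set.inter_eq_right.mpr hsub, Set.union_eq_left.mpr hsub]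
    exact ⟨hkZ', hkZ, by rw [hk2, hk3], hZ', hZ⟩
  -- generic case
  obtain ⟨⟨hZne, hZuniv⟩, hZconn, hZcconn⟩ := hZ
  obtain ⟨⟨hZ'ne, hZ'univ⟩, hZ'conn, hZ'cconn⟩ := hZ'
  have hDne : ((Z ∪ Z')ᶜ).Nonempty := Set.nonempty_compl.mpr hun
  have hfreeE : ∀ e, ¬(e ∈ TermPts s t Z ∧ e ∈ TermPts s t Z') := by
    intro e he
    exact (Set.eq_empty_iff_forall_notMem.mp hfree e) ⟨he.1, he.2⟩
  set EAB : Set E := {e | (s e ∈ Z ∩ Z' ∧ t e ∈ Z \ Z') ∨ (t e ∈ Z ∩ Z' ∧ s e ∈ Z \ Z')} with hEABd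
  set EAC : Set E := {e | (s e ∈ Z ∩ Z' ∧ t e ∈ Z' \ Z) ∨ (t e ∈ Z ∩ Z' ∧ s e ∈ Z' \ Z)} with hEACd
  set EBD : Set E := {e | (s e ∈ Z \ Z' ∧ t e ∈ (Z ∪ Z')ᶜ) ∨ (t e ∈ Z \ Z' ∧ s e ∈ (Z ∪ Z')ᶜ)} with hEBDd
  set ECD : Set E := {e | (s e ∈ Z' \ Z ∧ t e ∈ (Z ∪ Z')ᶜ) ∨ (t e ∈ Z' \ Z ∧ s e ∈ (Z ∪ Z')ᶜ)} with hECDd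
  have hTZ : TermPts s t Z = EAC ∪ EBD := by
    ext e; have hf := hfreeE e
    simp only [hEACd, hEBDd, TermPts, Set.mem_setOf_eq, Set.mem_union, Set.mem_inter_iff,
      Set.mem_diff, Set.mem_compl_iff] at hf ⊢
    clear hC hZconn hZcconn hZ'conn hZ'cconn hfree hfreeE hkZ hkZ' hk2 hk3 hZne hZuniv hZ'ne hZ'univ hDne hun hEABd hEACd hEBDd hECDd
    tauto
  have hTZ' : TermPts s t Z' = EAB ∪ ECD := by
    clear hTZ
    ext e; have hf := hfreeE e
    simp only [hEABd, hECDd, TermPts, Set.mem_setOf_eq, Set.mem_union, Set.mem_inter_iff,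
      Set.mem_diff, Set.mem_compl_iff] at hf ⊢
    clear hC hZconn hZcconn hZ'conn hZ'cconn hfree hfreeE hkZ hkZ' hk2 hk3 hZne hZuniv hZ'ne hZ'univ hDne hun hEABd hEACd hEBDd hECDd
    tauto
  have hTI : TermPts s t (Z ∩ Z') = EAB ∪ EAC := by
    clear hTZ hTZ'
    ext e; have hf := hfreeE e
    simp only [hEABd, hEACd, TermPts, Set.mem_setOf_eq, Set.mem_union, Set.mem_inter_iff,
      Set.mem_diff, Set.mem_compl_iff] at hf ⊢
    clear hC hZconn hZcconn hZ'conn hZ'cconn hfree hfreeE hkZ hkZ' hk2 hk3 hZne hZuniv hZ'ne hZ'univ hDne hun hEABd hEACd hEBDd hECDd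
    tauto
  have hTU : TermPts s t (Z ∪ Z') = EBD ∪ ECD := by
    clear hTZ hTZ' hTI
    ext e; have hf := hfreeE e
    simp only [hEBDd, hECDd, TermPts, Set.mem_setOf_eq, Set.mem_union, Set.mem_inter_iff,
      Set.mem_diff, Set.mem_compl_iff] at hf ⊢
    clear hC hZconn hZcconn hZ'conn hZ'cconn hfree hfreeE hkZ hkZ' hk2 hk3 hZne hZuniv hZ'ne hZ'univ hDne hun hEABd hEACd hEBDd hECDd
    tauto
  have d1 : Disjoint EAC EBD := by
    rw [Set.disjoint_left]; intro e h1 h2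
    simp only [hEACd, hEBDd, Set.mem_setOf_eq, Set.mem_inter_iff, Set.mem_diff,
      Set.mem_compl_iff, Set.mem_union] at h1 h2
    clear hC hZconn hZcconn hZ'conn hZ'cconn hfree hfreeE hkZ hkZ' hk2 hk3 hZne hZuniv hZ'ne hZ'univ hDne hun hEABd hEACd hEBDd hECDd hTZ hTZ' hTI hTU
    tauto
  have d2 : Disjoint EAB ECD := by
    rw [Set.disjoint_left]; intro e h1 h2
    simp only [hEABd, hECDd, Set.mem_setOf_eq, Set.mem_inter_iff, Set.mem_diff,
      Set.mem_compl_iff, Set.mem_union] at h1 h2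
    clear hC hZconn hZcconn hZ'conn hZ'cconn hfree hfreeE hkZ hkZ' hk2 hk3 hZne hZuniv hZ'ne hZ'univ hDne hun hEABd hEACd hEBDd hECDd hTZ hTZ' hTI hTU
    tauto
  have d3 : Disjoint EAB EAC := by
    rw [Set.disjoint_left]; intro e h1 h2
    simp only [hEABd, hEACd, Set.mem_setOf_eq, Set.mem_inter_iff, Set.mem_diff,
      Set.mem_compl_iff, Set.mem_union] at h1 h2
    clear hC hZconn hZcconn hZ'conn hZ'cconn hfree hfreeE hkZ hkZ' hk2 hk3 hZne hZuniv hZ'ne hZ'univ hDne hun hEABd hEACd hEBDd hECDd hTZ hTZ' hTI hTU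
    tauto
  have d4 : Disjoint EBD ECD := by
    rw [Set.disjoint_left]; intro e h1 h2
    simp only [hEBDd, hECDd, Set.mem_setOf_eq, Set.mem_inter_iff, Set.mem_diff,
      Set.mem_compl_iff, Set.mem_union] at h1 h2
    clear hC hZconn hZcconn hZ'conn hZ'cconn hfree hfreeE hkZ hkZ' hk2 hk3 hZne hZuniv hZ'ne hZ'univ hDne hun hEABd hEACd hEBDd hECDd hTZ hTZ' hTI hTU
    tauto
  obtain ⟨a, haZ, haZ'⟩ := hne
  obtain ⟨b, hbZ, hbZ'⟩ := hB
  obtain ⟨c, hcZ', hcZ⟩ := hCne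
  obtain ⟨d, hd⟩ := hDne
  have hdZ : d ∉ Z := fun h => hd (Or.inl h)
  have hdZ' : d ∉ Z' := fun h => hd (Or.inr h)
  -- nonemptiness of the four edge sets
  have hABne : EAB.Nonempty := by
    obtain ⟨e, hsW, htW, h⟩ := exists_cross s t (X := Z') hZconn haZ hbZ haZ' hbZ'
    refine ⟨e, ?_⟩
    rw [hEABd]
    rcases h with ⟨h1, h2⟩ | ⟨h1, h2⟩
    · exact Or.inl ⟨⟨hsW, h1⟩, htW, h2⟩
    · exact Or.inr ⟨⟨htW, h1⟩, hsW, h2⟩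
  have hACne : EAC.Nonempty := by
    obtain ⟨e, hsW, htW, h⟩ := exists_cross s t (X := Z) hZ'conn haZ' hcZ' haZ hcZ
    refine ⟨e, ?_⟩
    rw [hEACd]
    rcases h with ⟨h1, h2⟩ | ⟨h1, h2⟩
    · exact Or.inl ⟨⟨h1, hsW⟩, htW, h2⟩
    · exact Or.inr ⟨⟨h1, htW⟩, hsW, h2⟩
  have hBDne : EBD.Nonempty := by
    obtain ⟨e, hsW, htW, h⟩ := exists_cross s t (X := Z) hZ'cconn hbZ' hdZ' hbZ hdZ
    refine ⟨e, ?_⟩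
    rw [hEBDd]
    rcases h with ⟨h1, h2⟩ | ⟨h1, h2⟩
    · exact Or.inl ⟨⟨h1, hsW⟩, fun hm => hm.elim h2 htW⟩
    · exact Or.inr ⟨⟨h1, htW⟩, fun hm => hm.elim h2 hsW⟩
  have hCDne : ECD.Nonempty := by
    obtain ⟨e, hsW, htW, h⟩ := exists_cross s t (X := Z') hZcconn hcZ hdZ hcZ' hdZ'
    refine ⟨e, ?_⟩
    rw [hECDd]
    rcases h with ⟨h1, h2⟩ | ⟨h1, h2⟩
    · exact Or.inl ⟨⟨h1, hsW⟩, fun hm => hm.elim htW h2⟩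
    · exact Or.inr ⟨⟨h1, htW⟩, fun hm => hm.elim hsW h2⟩
  -- cardinalities
  have kZeq : EAC.ncard + EBD.ncard = 2 := by
    have h2 := hk2
    unfold kcut at h2
    rw [hTZ, Set.ncard_union_eq d1 (Set.toFinite _) (Set.toFinite _)] at h2
    exact h2
  have kZ'eq : EAB.ncard + ECD.ncard = 3 := by
    have h3 := hk3
    unfold kcut at h3
    rw [hTZ', Set.ncard_union_eq d2 (Set.toFinite _) (Set.toFinite _)] at h3
    exact h3
  have pAB : 0 < EAB.ncard := (Set.ncard_pos (Set.toFinite _)).mpr hABne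
  have pAC : 0 < EAC.ncard := (Set.ncard_pos (Set.toFinite _)).mpr hACne
  have pBD : 0 < EBD.ncard := (Set.ncard_pos (Set.toFinite _)).mpr hBDne
  have pCD : 0 < ECD.ncard := (Set.ncard_pos (Set.toFinite _)).mpr hCDne
  have hac : EAC.ncard = 1 := by omega
  have hbd : EBD.ncard = 1 := by omega
  have kI : kcut s t (Z ∩ Z') = EAB.ncard + EAC.ncard := by
    unfold kcut
    rw [hTI, Set.ncard_union_eq d3 (Set.toFinite _) (Set.toFinite _)]
  have kU : kcut s t (Z ∪ Z') = EBD.ncard + ECD.ncard := by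
    unfold kcut
    rw [hTU, Set.ncard_union_eq d4 (Set.toFinite _) (Set.toFinite _)]
  -- connectivity of the intersection
  have hconnI : ConnOn s t (Z ∩ Z') := by
    obtain ⟨e0, hE0⟩ := Set.ncard_eq_one.mp hac
    have he0 : e0 ∈ EAC := by rw [hE0]; exact rfl
    have toEAC1 : ∀ e, s e ∈ Z' → t e ∈ Z' → s e ∈ Z ∩ Z' → t e ∉ Z ∩ Z' → e ∈ EAC := by
      intro e h1 h2 h3 h4
      rw [hEACd]
      exact Or.inl ⟨h3, h2, fun h => h4 ⟨h, h2⟩⟩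
    have toEAC2 : ∀ e, s e ∈ Z' → t e ∈ Z' → t e ∈ Z ∩ Z' → s e ∉ Z ∩ Z' → e ∈ EAC := by
      intro e h1 h2 h3 h4
      rw [hEACd]
      exact Or.inr ⟨h3, h1, fun h => h4 ⟨h, h1⟩⟩
    simp only [hEACd, Set.mem_setOf_eq, Set.mem_inter_iff, Set.mem_diff] at he0
    rcases he0 with ⟨⟨hA1, hA2⟩, hC1, hC2⟩ | ⟨⟨hA1, hA2⟩, hC1, hC2⟩
    · refine connOn_of_unique_cross s t hZ'conn Set.inter_subset_right
        (a0 := s e0) ⟨hA1, hA2⟩ ?_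
      intro e hsW htW
      constructor
      · intro hsX htX
        have hm : e ∈ EAC := toEAC1 e hsW htW hsX htX
        rw [hE0, Set.mem_singleton_iff] at hm
        rw [hm]
      · intro htX hsX
        have hm : e ∈ EAC := toEAC2 e hsW htW htX hsX
        rw [hE0, Set.mem_singleton_iff] at hm
        rw [hm] at htX
        exact absurd htX.1 hC2
    · refine connOn_of_unique_cross s t hZ'conn Set.inter_subset_right
        (a0 := t e0) ⟨hA1, hA2⟩ ?_
      intro e hsW htW
      constructor
      · intro hsX htX
        have hm : e ∈ EAC := toEAC1 e hsW htW hsX htX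
        rw [hE0, Set.mem_singleton_iff] at hm
        rw [hm] at hsX
        exact absurd hsX.1 hC2
      · intro htX hsX
        have hm : e ∈ EAC := toEAC2 e hsW htW htX hsX
        rw [hE0, Set.mem_singleton_iff] at hm
        rw [hm]
  -- connectivity of the complement of the intersection
  have hconnIc : ConnOn s t ((Z ∩ Z')ᶜ) := by
    rw [Set.compl_inter]
    refine connOn_union s t hZcconn hZ'cconn ?_
    rw [← Set.compl_union]
    exact ⟨d, hd⟩
  -- connectivity of the union
  have hconnU : ConnOn s t (Z ∪ Z') := connOn_union s t hZconn hZ'conn ⟨a, haZ, haZ'⟩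
  -- connectivity of the complement of the union
  have hconnUc : ConnOn s t ((Z ∪ Z')ᶜ) := by
    obtain ⟨e1, hE1⟩ := Set.ncard_eq_one.mp hbd
    have he1 : e1 ∈ EBD := by rw [hE1]; exact rfl
    have hXW : (Z ∪ Z')ᶜ ⊆ Z'ᶜ := Set.compl_subset_compl.mpr subset_union_right
    have toEBD1 : ∀ e, s e ∈ Z'ᶜ → t e ∈ Z'ᶜ → s e ∈ (Z ∪ Z')ᶜ → t e ∉ (Z ∪ Z')ᶜ → e ∈ EBD := by
      intro e h1 h2 h3 h4
      rw [hEBDd]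
      have h4' : t e ∈ Z ∪ Z' := by by_contra hcon; exact h4 hcon
      have htZ : t e ∈ Z := h4'.elim id (fun h => absurd h h2)
      exact Or.inr ⟨⟨htZ, h2⟩, h3⟩
    have toEBD2 : ∀ e, s e ∈ Z'ᶜ → t e ∈ Z'ᶜ → t e ∈ (Z ∪ Z')ᶜ → s e ∉ (Z ∪ Z')ᶜ → e ∈ EBD := by
      intro e h1 h2 h3 h4
      rw [hEBDd]
      have h4' : s e ∈ Z ∪ Z' := by by_contra hcon; exact h4 hcon
      have hsZ : s e ∈ Z := h4'.elim id (fun h => absurd h h1)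
      exact Or.inl ⟨⟨hsZ, h1⟩, h3⟩
    simp only [hEBDd, Set.mem_setOf_eq, Set.mem_diff, Set.mem_compl_iff, Set.mem_union] at he1
    rcases he1 with ⟨⟨hB1, hB2⟩, hD1⟩ | ⟨⟨hB1, hB2⟩, hD1⟩
    · refine connOn_of_unique_cross s t hZ'cconn hXW (a0 := t e1) (fun h => hD1 h) ?_
      intro e hsW htW
      constructor
      · intro hsX htX
        have hm : e ∈ EBD := toEBD1 e hsW htW hsX htX
        rw [hE1, Set.mem_singleton_iff] at hm
        rw [hm] at hsX
        exact absurd (Or.inl hB1) hsX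
      · intro htX hsX
        have hm : e ∈ EBD := toEBD2 e hsW htW htX hsX
        rw [hE1, Set.mem_singleton_iff] at hm
        rw [hm]
    · refine connOn_of_unique_cross s t hZ'cconn hXW (a0 := s e1) (fun h => hD1 h) ?_
      intro e hsW htW
      constructor
      · intro hsX htX
        have hm : e ∈ EBD := toEBD1 e hsW htW hsX htX
        rw [hE1, Set.mem_singleton_iff] at hm
        rw [hm]
      · intro htX hsX
        have hm : e ∈ EBD := toEBD2 e hsW htW htX hsX
        rw [hE1, Set.mem_singleton_iff] at hm
        rw [hm] at htX
        exact absurd (Or.inl hB1) htX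
  refine ⟨?_, ?_, ?_, ⟨⟨⟨a, haZ, haZ'⟩, ?_⟩, hconnI, hconnIc⟩,
    ⟨⟨⟨a, Or.inl haZ⟩, hun⟩, hconnU, hconnUc⟩⟩
  · rw [kI]; omega
  · rw [kU]; omega
  · rw [kI, kU]; omega
  · intro h
    exact hZuniv (Set.eq_univ_of_univ_subset (h ▸ Set.inter_subset_left))
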